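/- Let α ≥ 0, β > 0 and γ > 0. Then the expected remaining life-length at age 0 under Gompertz–Makeham mortality can be expressed via an upper incomplete gamma function with (possibly negative) shape parameter: e₀(α,β,γ) = (β/γ)^{α/γ} · (e^{β/γ}/γ) · Γ(−α/γ, β/γ). -/

import Mathlib

open MeasureTheory

/-- Gompertz–Makeham survival function `l(x; α, β, γ) = exp(-αx - (β/γ)(e^{γx} - 1))`. -/
noncomputable def survival (α β γ x : ℝ) : ℝ :=
  Real.exp (-α * x - β / γ * (Real.exp (γ * x) - 1))

/-- Expected remaining life-length at age 0: `e₀(α,β,γ) = ∫₀^∞ l(t;α,β,γ) dt`. -/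
noncomputable def e0 (α β γ : ℝ) : ℝ :=
  ∫ t in Set.Ioi (0 : ℝ), survival α β γ t

/-- Upper incomplete gamma function `Γ(η, z) = ∫_z^∞ y^{η-1} e^{-y} dy`. -/
noncomputable def upperGamma (η z : ℝ) : ℝ :=
  ∫ y in Set.Ioi z, y ^ (η - 1) * Real.exp (-y)

theorem e0_eq_upperGamma_expression (α β γ : ℝ)
    (hα : 0 ≤ α) (hβ : 0 < β) (hγ : 0 < γ) :
    e0 α β γ =
      (β / γ) ^ (α / γ) * (Real.exp (β / γ) / γ) * upperGamma (-(α / γ)) (β / γ) := by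
  have hbg : (0:ℝ) < β / γ := div_pos hβ hγ
  set f : ℝ → ℝ := fun t => β / γ * Real.exp (γ * t) with hf
  -- image
  have himg : Set.Ioi (β / γ) = f '' Set.Ioi (0:ℝ) := by
    ext y
    constructor
    · intro hy
      have hy0 : 0 < y := lt_trans hbg hy
      refine ⟨(1/γ) * Real.log (y / (β/γ)), ?_, ?_⟩
      · have h1 : (1:ℝ) < y / (β/γ) := (one_lt_div hbg).2 hy
        have := Real.log_pos h1
        exact mul_pos (by positivity) this
      · have h1 : 0 < y / (β/γ) := div_pos hy0 hbg
        simp only [hf]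
        rw [show γ * ((1/γ) * Real.log (y / (β/γ))) = Real.log (y / (β/γ)) by
          field_simp, Real.exp_log h1]
        field_simp
    · rintro ⟨t, ht, rfl⟩
      simp only [hf, Set.mem_Ioi]
      have : 1 < Real.exp (γ * t) := by
        rw [show (1:ℝ) = Real.exp 0 from Real.exp_zero.symm]
        exact Real.exp_lt_exp.2 (mul_pos hγ (Set.mem_Ioi.1 ht))
      nlinarith [this, hbg]
  have hderiv : ∀ t ∈ Set.Ioi (0:ℝ),
      HasDerivWithinAt f (β * Real.exp (γ * t)) (Set.Ioi 0) t := by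
    intro t _
    have h1 : HasDerivAt (fun t : ℝ => γ * t) γ t := by
      simpa using (hasDerivAt_id t).const_mul γ
    have h2 := (Real.hasDerivAt_exp (γ * t)).comp t h1
    have h3 := h2.const_mul (β / γ)
    have : β / γ * (Real.exp (γ * t) * γ) = β * Real.exp (γ * t) := by field_simp
    rw [this] at h3
    exact h3.hasDerivWithinAt
  have hmono : StrictMono f := by
    intro a b hab
    exact mul_lt_mul_of_pos_left (Real.exp_lt_exp.2 (by nlinarith)) hbg
  have hinj : Set.InjOn f (Set.Ioi 0) := hmono.injective.injOn
  have key : upperGamma (-(α/γ)) (β / γ)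
      = ∫ t in Set.Ioi (0:ℝ), |β * Real.exp (γ * t)| •
          ((f t) ^ (-(α/γ) - 1) * Real.exp (-(f t))) := by
    rw [upperGamma, himg,
      integral_image_eq_integral_abs_deriv_smul measurableSet_Ioi hderiv hinj]
  rw [key, ← smul_eq_mul, ← integral_smul]
  refine (setIntegral_congr_fun measurableSet_Ioi fun t _ => ?_).symm
  have he : (0:ℝ) < Real.exp (γ * t) := Real.exp_pos _
  have habs : |β * Real.exp (γ * t)| = β * Real.exp (γ * t) :=
    abs_of_pos (mul_pos hβ he)
  simp only [smul_eq_mul, habs, survival, hf]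
  rw [Real.mul_rpow hbg.le he.le, Real.rpow_def_of_pos hbg, Real.rpow_def_of_pos hbg,
    Real.rpow_def_of_pos he, Real.log_exp]
  rw [show Real.exp (β/γ) / γ = Real.exp (β/γ) * γ⁻¹ by ring]
  simp only [← Real.exp_add, ← mul_assoc]
  have hb : Real.exp (Real.log (β/γ) * (α/γ) + β/γ) * γ⁻¹ * β
      = Real.exp (Real.log (β/γ) * (α/γ) + β/γ + Real.log (β/γ)) := by
    simp only [Real.exp_add, Real.exp_log hbg]; ring
  rw [hb, ← Real.exp_add, ← Real.exp_add]
  congr 1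
  field_simp
  ring
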